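/- Converse for linearly many switches (special case): Let X = X̂ = {0,1}, Λ the Hamming loss, and let the channel be a BSC with crossover probability 0 < δ < 1/2. Suppose m ≥ αn for some α > 0 and all large n. Construct the random process X by concatenating i.i.d. blocks of length L = ⌈1/α⌉, each block consisting of one symbol drawn uniformly from {0,1} repeated L times. Then (a) D_{0,m}(Xⁿ,Zⁿ) = 0 almost surely for all n large enough that m ≥ αn, i.e., a genie switching among symbol-by-symbol denoisers at most m times achieves zero loss; and (b) for any sequence of n-block denoisers X̂ⁿ, limsup_n E[L_{X̂ⁿ}(Xⁿ,Zⁿ)] > 0. Consequently limsup_n E[L_{X̂ⁿ}(Xⁿ,Zⁿ) − D_{0,m}(Xⁿ,Zⁿ)] > 0, and there exists an individual sequence x ∈ {0,1}^∞ for which this limsup of the conditional expectation given Xⁿ = xⁿ is positive. -/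

import Mathlib

open MeasureTheory ProbabilityTheory Filter
open scoped Topology

/-- Number of switches in an `n`-tuple of single-symbol denoisers `S : Fin n → Bool → Bool`. -/
def switchCount {n : ℕ} (S : Fin n → Bool → Bool) : ℕ :=
  (Finset.univ.filter fun t : Fin n =>
    0 < t.val ∧ S t ≠ S ⟨t.val - 1, Nat.lt_of_le_of_lt (Nat.sub_le _ _) t.isLt⟩).card

/-- Normalized Hamming loss between a clean sequence and a reconstruction. -/
noncomputable def hamLoss (n : ℕ) (x xhat : Fin n → Bool) : ℝ :=
  (1 / (n : ℝ)) * ∑ t, if xhat t ≠ x t then (1 : ℝ) else 0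

/-- `D_{0,m}(xⁿ,zⁿ)`: minimal normalized Hamming loss achievable by tuples of
single-symbol denoisers with at most `m` switches. -/
noncomputable def D0m (n m : ℕ) (x z : Fin n → Bool) : ℝ :=
  sInf ((fun S : Fin n → Bool → Bool => hamLoss n x fun t => S t (z t)) ''
    {S | switchCount S ≤ m})

lemma hamLoss_nonneg (n : ℕ) (x y : Fin n → Bool) : 0 ≤ hamLoss n x y := by
  unfold hamLoss
  apply mul_nonneg (by positivity)
  exact Finset.sum_nonneg fun t _ => by positivity

lemma hamLoss_le_one (n : ℕ) (x y : Fin n → Bool) : hamLoss n x y ≤ 1 := by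
  unfold hamLoss
  rcases Nat.eq_zero_or_pos n with h | h
  · subst h; simp
  have h1 : ∑ t : Fin n, (if y t ≠ x t then (1:ℝ) else 0) ≤ n := by
    calc ∑ t : Fin n, (if y t ≠ x t then (1:ℝ) else 0) ≤ ∑ _t : Fin n, (1:ℝ) := by
          apply Finset.sum_le_sum; intro t _; split <;> norm_num
      _ = n := by simp
  have hn : (0:ℝ) < n := by exact_mod_cast h
  rw [div_mul_eq_mul_div, one_mul, div_le_one hn]
  exact h1

lemma hamLoss_self (n : ℕ) (x : Fin n → Bool) : hamLoss n x x = 0 := by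
  unfold hamLoss; simp

lemma D0m_eq_zero (L n m : ℕ) (hL : 0 < L) (b : ℕ → Bool) (x z : Fin n → Bool)
    (hx : ∀ t : Fin n, x t = b ((t : ℕ) / L)) (hm : n / L ≤ m) :
    D0m n m x z = 0 := by
  have lb : ∀ y ∈ ((fun S : Fin n → Bool → Bool => hamLoss n x fun t => S t (z t)) ''
      {S | switchCount S ≤ m}), 0 ≤ y := by
    rintro y ⟨S, -, rfl⟩; exact hamLoss_nonneg _ _ _
  have hmem : (0:ℝ) ∈ ((fun S : Fin n → Bool → Bool => hamLoss n x fun t => S t (z t)) ''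
      {S | switchCount S ≤ m}) := by
    refine ⟨fun t _ => x t, ?_, hamLoss_self n x⟩
    -- switch count bound
    simp only [Set.mem_setOf_eq, switchCount]
    have key : ∀ a : ℕ, 0 < a → ¬ L ∣ a → a / L = (a - 1) / L := by
      intro a ha hnd
      have h1 : a - 1 + 1 = a := by omega
      calc a / L = (a - 1 + 1) / L := by rw [h1]
        _ = (a - 1) / L := Nat.succ_div_of_not_dvd (by rwa [h1])
    have hsub : (Finset.univ.filter fun t : Fin n =>
        0 < t.val ∧ (fun _ => x t) ≠ (fun _ => x ⟨t.val - 1, Nat.lt_of_le_of_lt (Nat.sub_le _ _) t.isLt⟩ : Bool → Bool)).card ≤ (Finset.Icc 1 (n / L)).card := by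
      refine Finset.card_le_card_of_injOn (t := Finset.Icc 1 (n/L)) (fun t => (t : ℕ) / L) ?_ ?_
      · intro t ht
        simp only [Finset.mem_coe, Finset.mem_filter, Finset.mem_univ, true_and] at ht
        obtain ⟨hpos, hne⟩ := ht
        have hxne : x t ≠ x ⟨t.val - 1, Nat.lt_of_le_of_lt (Nat.sub_le _ _) t.isLt⟩ := by
          intro h; exact hne (by funext _; exact h)
        have hdvd : L ∣ (t : ℕ) := by
          by_contra hnd
          apply hxne
          rw [hx, hx]
          exact congrArg b (key _ hpos hnd)
        have h1 : 1 ≤ (t : ℕ) / L := Nat.one_le_div_iff hL |>.2 (Nat.le_of_dvd hpos hdvd)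
        have h2 : (t : ℕ) / L ≤ n / L := Nat.div_le_div_right (le_of_lt t.isLt)
        exact Finset.mem_Icc.2 ⟨h1, h2⟩
      · intro t ht s hs hts
        simp only [Finset.mem_coe, Finset.mem_filter, Finset.mem_univ, true_and] at ht hs
        -- both divisible by L
        have hdt : L ∣ (t : ℕ) := by
          by_contra hnd
          obtain ⟨hpos, hne⟩ := ht
          apply hne; funext _
          rw [hx, hx]
          exact congrArg b (key _ hpos hnd)
        have hds : L ∣ (s : ℕ) := by
          by_contra hnd
          obtain ⟨hpos, hne⟩ := hs
          apply hne; funext _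
          rw [hx, hx]
          exact congrArg b (key _ hpos hnd)
        have : (t : ℕ) = (s : ℕ) := by
          have h1 := Nat.div_mul_cancel hdt
          have h2 := Nat.div_mul_cancel hds
          rw [← h1, ← h2]
          exact congrArg (· * L) hts
        exact Fin.ext this
      done
    calc _ ≤ (Finset.Icc 1 (n / L)).card := hsub
      _ = n / L := by simp
      _ ≤ m := hm
  refine le_antisymm (csInf_le ⟨0, lb⟩ hmem) (le_csInf ⟨0, hmem⟩ lb)


section ProbHelpers
variable {Ω : Type*} [MeasurableSpace Ω]

lemma measurable_xor_comp {a b : Ω → Bool} (ha : Measurable a) (hb : Measurable b) :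
    Measurable fun ω => xor (a ω) (b ω) := by
  have : (fun ω => xor (a ω) (b ω)) = (fun p : Bool × Bool => xor p.1 p.2) ∘ (fun ω => (a ω, b ω)) := rfl
  rw [this]; exact (measurable_of_finite _).comp (ha.prodMk hb)


lemma error_lb (μ : Measure Ω) [IsProbabilityMeasure μ]
    (δ : ℝ) (hδ0 : 0 < δ) (hδ1 : δ < 1 / 2)
    (U Nse : ℕ → Ω → Bool)
    (hmeasU : ∀ i, Measurable (U i)) (hmeasN : ∀ i, Measurable (Nse i))
    (hindep : iIndepFun (Sum.elim U Nse) μ)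
    (hU : ∀ i, μ {ω | U i ω = true} = 1 / 2)
    (hN : ∀ i, μ {ω | Nse i ω = true} = ENNReal.ofReal δ)
    (L : ℕ) (hL : 0 < L) (n : ℕ) (t : Fin n) (f : (Fin n → Bool) → Bool) :
    ENNReal.ofReal (δ ^ L / 2) ≤
      μ {ω | f (fun i => xor (U ((i : ℕ) / L) ω) (Nse (i : ℕ) ω)) ≠ U ((t : ℕ) / L) ω} := by
  classical
  set k : ℕ := (t : ℕ) / L with hk
  set f0 : ℕ ⊕ ℕ → Ω → Bool := Sum.elim U Nse with hf0
  have hmeasf : ∀ j, Measurable (f0 j) := by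
    intro j; cases j with
    | inl a => exact hmeasU a
    | inr a => exact hmeasN a
  set B : Finset (Fin n) := Finset.univ.filter (fun i => (i : ℕ) / L = k) with hB
  have hBdiv : ∀ i ∈ B, (i : ℕ) / L = k := by
    intro i hi; simpa [hB] using hi
  have hBmem : ∀ i : Fin n, (i : ℕ) / L = k → i ∈ B := by
    intro i hi; simp [hB, hi]
  have hBcard : B.card ≤ L := by
    have : B.card ≤ (Finset.Ico (k * L) (k * L + L)).card := by
      refine Finset.card_le_card_of_injOn (t := Finset.Ico (k * L) (k * L + L))
        (fun i => (i : ℕ)) ?_ ?_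
      · intro i hi
        have hik := hBdiv i hi
        have h1 := Nat.div_add_mod (i : ℕ) L
        have h2 := Nat.mod_lt (i : ℕ) hL
        rw [hik, Nat.mul_comm L k] at h1
        simp only [Finset.mem_coe, Finset.mem_Ico]
        omega
      · intro a _ b _ hab
        exact Fin.ext hab
    simpa using this
  set Bn : Finset ℕ := B.image Fin.val with hBn
  have hBncard : Bn.card ≤ L := le_trans (Finset.card_image_le) hBcard
  have hBnmem : ∀ j, j ∈ Bn ↔ ∃ i : Fin n, i ∈ B ∧ (i : ℕ) = j := by
    intro j; simp [hBn]
  set S : Finset (ℕ ⊕ ℕ) := insert (Sum.inl k) (Bn.image Sum.inr) with hS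
  set T : Finset (ℕ ⊕ ℕ) :=
    (((Finset.range n).image Sum.inl) ∪ ((Finset.range n).image Sum.inr)) \ S with hT
  have hST : Disjoint S T := Finset.disjoint_sdiff
  have hIF := hindep.indepFun_finset S T hST hmeasf
  have hmemT1 : ∀ i : Fin n, ¬ ((i : ℕ) / L = k) → (Sum.inl ((i : ℕ) / L) : ℕ ⊕ ℕ) ∈ T := by
    intro i hik
    have hin : (i : ℕ) / L < n := Nat.lt_of_le_of_lt (Nat.div_le_self _ _) i.isLt
    simp only [hT, Finset.mem_sdiff, Finset.mem_union, Finset.mem_image, hS,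
      Finset.mem_insert]
    constructor
    · left; exact ⟨(i : ℕ) / L, Finset.mem_range.2 hin, rfl⟩
    · rintro (h | ⟨j, hj, hjj⟩)
      · exact hik (by simpa using h)
      · exact absurd hjj (by simp)
  have hmemT2 : ∀ i : Fin n, ¬ ((i : ℕ) / L = k) → (Sum.inr (i : ℕ) : ℕ ⊕ ℕ) ∈ T := by
    intro i hik
    simp only [hT, Finset.mem_sdiff, Finset.mem_union, Finset.mem_image, hS,
      Finset.mem_insert]
    constructor
    · right; exact ⟨(i : ℕ), Finset.mem_range.2 i.isLt, rfl⟩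
    · rintro (h | ⟨j, hj, hjj⟩)
      · exact absurd h (by simp)
      · have hji : j = (i : ℕ) := by injection hjj
        subst hji
        obtain ⟨a, ha, haj⟩ := (hBnmem _).1 hj
        have : a = i := Fin.ext haj
        subst this
        exact hik (hBdiv a ha)
  set GT : ({j : ℕ ⊕ ℕ // j ∈ T} → Bool) → Bool := fun v =>
    f (fun i => if hik : (i : ℕ) / L = k then false
        else xor (v ⟨Sum.inl ((i : ℕ) / L), hmemT1 i hik⟩) (v ⟨Sum.inr (i : ℕ), hmemT2 i hik⟩))
    with hGT
  set tupS : Ω → ({j : ℕ ⊕ ℕ // j ∈ S} → Bool) := fun ω j => f0 (j : ℕ ⊕ ℕ) ω with htupS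
  set tupT : Ω → ({j : ℕ ⊕ ℕ // j ∈ T} → Bool) := fun ω j => f0 (j : ℕ ⊕ ℕ) ω with htupT
  set g : Ω → Bool := fun ω => GT (tupT ω) with hg
  -- pointwise identities
  have hg0 : ∀ ω, U k ω = false → (∀ i ∈ B, Nse (i : ℕ) ω = false) →
      f (fun i => xor (U ((i : ℕ) / L) ω) (Nse (i : ℕ) ω)) = g ω := by
    intro ω hUk hNB
    simp only [hg, hGT]
    congr 1
    funext i
    by_cases hik : (i : ℕ) / L = k
    · rw [dif_pos hik, hik, hUk, hNB i (hBmem i hik)]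
      rfl
    · rw [dif_neg hik]
      rfl
  have hg1 : ∀ ω, U k ω = true → (∀ i ∈ B, Nse (i : ℕ) ω = true) →
      f (fun i => xor (U ((i : ℕ) / L) ω) (Nse (i : ℕ) ω)) = g ω := by
    intro ω hUk hNB
    simp only [hg, hGT]
    congr 1
    funext i
    by_cases hik : (i : ℕ) / L = k
    · rw [dif_pos hik, hik, hUk, hNB i (hBmem i hik)]
      rfl
    · rw [dif_neg hik]
      rfl
  -- sets and events
  set s0 : Set ({j : ℕ ⊕ ℕ // j ∈ S} → Bool) := {v | ∀ j, v j = false} with hs0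
  set s1 : Set ({j : ℕ ⊕ ℕ // j ∈ S} → Bool) := {v | ∀ j, v j = true} with hs1
  have ms0 : MeasurableSet s0 := (Set.toFinite _).measurableSet
  have ms1 : MeasurableSet s1 := (Set.toFinite _).measurableSet
  have hinlS : (Sum.inl k : ℕ ⊕ ℕ) ∈ S := Finset.mem_insert_self _ _
  have hinrS : ∀ i ∈ B, (Sum.inr (i : ℕ) : ℕ ⊕ ℕ) ∈ S := fun i hi =>
    Finset.mem_insert_of_mem (Finset.mem_image.2 ⟨(i : ℕ), (hBnmem _).2 ⟨i, hi, rfl⟩, rfl⟩)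
  have mtupS : Measurable tupS := measurable_pi_lambda _ (fun j => hmeasf j)
  have mtupT : Measurable tupT := measurable_pi_lambda _ (fun j => hmeasf j)
  have mg : Measurable g := (measurable_of_finite GT).comp mtupT
  -- product formula for the two extreme events
  have hpre : ∀ bv : Bool, tupS ⁻¹' {v | ∀ j, v j = bv} = ⋂ j ∈ S, f0 j ⁻¹' {bv} := by
    intro bv; ext ω
    simp only [Set.mem_preimage, Set.mem_setOf_eq, Set.mem_iInter, Set.mem_singleton_iff,
      htupS, Subtype.forall]
  have hmeasprod : ∀ bv : Bool, μ (tupS ⁻¹' {v | ∀ j, v j = bv}) =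
      μ (U k ⁻¹' {bv}) * ∏ j ∈ Bn, μ (Nse j ⁻¹' {bv}) := by
    intro bv
    rw [hpre bv]
    rw [iIndepFun.measure_inter_preimage_eq_mul hindep S (sets := fun _ => ({bv} : Set Bool))
      (fun i _ => (Set.toFinite _).measurableSet)]
    rw [hS, Finset.prod_insert (by simp), Finset.prod_image (fun a _ b _ h => Sum.inr.inj h)]
    rfl
  -- individual probabilities
  have hUcompl : ∀ j : ℕ, μ (U j ⁻¹' {false}) = 1 / 2 := by
    intro j
    have h1 : U j ⁻¹' {false} = (U j ⁻¹' {true})ᶜ := by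
      ext ω; simp
    have h2 : μ (U j ⁻¹' {true}) = 1 / 2 := hU j
    rw [h1, measure_compl ((hmeasU j) (measurableSet_singleton _)) (measure_ne_top μ _), h2]
    rw [measure_univ]
    exact ENNReal.sub_half ENNReal.one_ne_top
  have hNtrue : ∀ j : ℕ, μ (Nse j ⁻¹' {true}) = ENNReal.ofReal δ := fun j => hN j
  have hNcompl : ∀ j : ℕ, μ (Nse j ⁻¹' {false}) = ENNReal.ofReal (1 - δ) := by
    intro j
    have h1 : Nse j ⁻¹' {false} = (Nse j ⁻¹' {true})ᶜ := by
      ext ω; simp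
    rw [h1, measure_compl ((hmeasN j) (measurableSet_singleton _)) (measure_ne_top μ _),
      hNtrue j, measure_univ, ENNReal.ofReal_sub _ (le_of_lt hδ0), ENNReal.ofReal_one]
  have hA0 : μ (tupS ⁻¹' s0) = 1 / 2 * ENNReal.ofReal (1 - δ) ^ Bn.card := by
    rw [hs0, hmeasprod false, hUcompl k, Finset.prod_congr rfl (fun j _ => hNcompl j),
      Finset.prod_const]
  have hA1 : μ (tupS ⁻¹' s1) = 1 / 2 * ENNReal.ofReal δ ^ Bn.card := by
    rw [hs1, hmeasprod true]
    have : (U k ⁻¹' {true}) = {ω | U k ω = true} := rfl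
    rw [this, hU k, Finset.prod_congr rfl (fun j _ => hNtrue j), Finset.prod_const]
  -- lower bound on the two extreme events
  have hδle1 : δ ≤ 1 := by linarith
  have key : ∀ (r : ℝ) (b : ℕ), δ ≤ r → b ≤ L →
      ENNReal.ofReal (δ ^ L / 2) ≤ 1 / 2 * ENNReal.ofReal r ^ b := by
    intro r b hr hb
    have h1 : ENNReal.ofReal (δ ^ L / 2) = 1 / 2 * ENNReal.ofReal (δ ^ L) := by
      rw [div_eq_mul_inv, ENNReal.ofReal_mul (by positivity), mul_comm]
      congr 1
      rw [show ((2 : ℝ)⁻¹ = 1 / 2) by norm_num, ENNReal.ofReal_div_of_pos (by norm_num)]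
      simp
    rw [h1]
    apply mul_le_mul_right
    rw [ENNReal.ofReal_pow (le_of_lt hδ0)]
    calc ENNReal.ofReal δ ^ L ≤ ENNReal.ofReal δ ^ b :=
          pow_le_pow_of_le_one zero_le (ENNReal.ofReal_le_one.2 hδle1) hb
      _ ≤ ENNReal.ofReal r ^ b :=
          pow_le_pow_left₀ zero_le (ENNReal.ofReal_le_ofReal hr) b
  have hA0lb : ENNReal.ofReal (δ ^ L / 2) ≤ μ (tupS ⁻¹' s0) := by
    rw [hA0]; exact key (1 - δ) Bn.card (by linarith) hBncard
  have hA1lb : ENNReal.ofReal (δ ^ L / 2) ≤ μ (tupS ⁻¹' s1) := by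
    rw [hA1]; exact key δ Bn.card le_rfl hBncard
  -- independence of the two pieces
  have hC0 := hIF.measure_inter_preimage_eq_mul s0 (GT ⁻¹' {true}) ms0
    ((Set.toFinite _).measurableSet)
  have hC1 := hIF.measure_inter_preimage_eq_mul s1 (GT ⁻¹' {false}) ms1
    ((Set.toFinite _).measurableSet)
  -- total probability of g
  have hgsum : μ (tupT ⁻¹' (GT ⁻¹' {true})) + μ (tupT ⁻¹' (GT ⁻¹' {false})) = 1 := by
    have e1 : tupT ⁻¹' (GT ⁻¹' {true}) = g ⁻¹' {true} := rfl
    have e2 : tupT ⁻¹' (GT ⁻¹' {false}) = g ⁻¹' {false} := rfl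
    have e3 : g ⁻¹' {false} = (g ⁻¹' {true})ᶜ := by ext ω; simp
    rw [e1, e2, e3]
    exact prob_add_prob_compl (mg (measurableSet_singleton _))
  -- inclusion into the error event
  have hsub : (tupS ⁻¹' s0 ∩ tupT ⁻¹' (GT ⁻¹' {true})) ∪
      (tupS ⁻¹' s1 ∩ tupT ⁻¹' (GT ⁻¹' {false})) ⊆
      {ω | f (fun i => xor (U ((i : ℕ) / L) ω) (Nse (i : ℕ) ω)) ≠ U k ω} := by
    rintro ω (⟨hA, hGv⟩ | ⟨hA, hGv⟩)
    · have hUk : U k ω = false := hA ⟨Sum.inl k, hinlS⟩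
      have hNB : ∀ i ∈ B, Nse (i : ℕ) ω = false := fun i hi => hA ⟨Sum.inr (i : ℕ), hinrS i hi⟩
      have hfg := hg0 ω hUk hNB
      have hgv : g ω = true := hGv
      simp only [Set.mem_setOf_eq, hfg, hgv, hUk]
      simp
    · have hUk : U k ω = true := hA ⟨Sum.inl k, hinlS⟩
      have hNB : ∀ i ∈ B, Nse (i : ℕ) ω = true := fun i hi => hA ⟨Sum.inr (i : ℕ), hinrS i hi⟩
      have hfg := hg1 ω hUk hNB
      have hgv : g ω = false := hGv
      simp only [Set.mem_setOf_eq, hfg, hgv, hUk]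
      simp
  have hdisj : Disjoint (tupS ⁻¹' s0 ∩ tupT ⁻¹' (GT ⁻¹' {true}))
      (tupS ⁻¹' s1 ∩ tupT ⁻¹' (GT ⁻¹' {false})) := by
    rw [Set.disjoint_left]
    rintro ω ⟨hA, -⟩ ⟨hA', -⟩
    have h1 : U k ω = false := hA ⟨Sum.inl k, hinlS⟩
    have h2 : U k ω = true := hA' ⟨Sum.inl k, hinlS⟩
    rw [h1] at h2; exact Bool.false_ne_true h2
  have hmeas1 : MeasurableSet (tupS ⁻¹' s1 ∩ tupT ⁻¹' (GT ⁻¹' {false})) :=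
    (mtupS ms1).inter (mtupT ((Set.toFinite _).measurableSet))
  calc ENNReal.ofReal (δ ^ L / 2)
      = ENNReal.ofReal (δ ^ L / 2) *
        (μ (tupT ⁻¹' (GT ⁻¹' {true})) + μ (tupT ⁻¹' (GT ⁻¹' {false}))) := by
        rw [hgsum, mul_one]
    _ ≤ μ (tupS ⁻¹' s0) * μ (tupT ⁻¹' (GT ⁻¹' {true})) +
        μ (tupS ⁻¹' s1) * μ (tupT ⁻¹' (GT ⁻¹' {false})) := by
        rw [mul_add]
        exact add_le_add (mul_le_mul_left hA0lb _) (mul_le_mul_left hA1lb _)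
    _ = μ (tupS ⁻¹' s0 ∩ tupT ⁻¹' (GT ⁻¹' {true})) +
        μ (tupS ⁻¹' s1 ∩ tupT ⁻¹' (GT ⁻¹' {false})) := by rw [hC0, hC1]
    _ = μ ((tupS ⁻¹' s0 ∩ tupT ⁻¹' (GT ⁻¹' {true})) ∪
        (tupS ⁻¹' s1 ∩ tupT ⁻¹' (GT ⁻¹' {false}))) := (measure_union hdisj hmeas1).symm
    _ ≤ _ := measure_mono hsub

lemma exp_loss_lb (μ : Measure Ω) [IsProbabilityMeasure μ]
    (δ : ℝ) (hδ0 : 0 < δ) (hδ1 : δ < 1 / 2)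
    (U Nse : ℕ → Ω → Bool)
    (hmeasU : ∀ i, Measurable (U i)) (hmeasN : ∀ i, Measurable (Nse i))
    (hindep : iIndepFun (Sum.elim U Nse) μ)
    (hU : ∀ i, μ {ω | U i ω = true} = 1 / 2)
    (hN : ∀ i, μ {ω | Nse i ω = true} = ENNReal.ofReal δ)
    (L : ℕ) (hL : 0 < L) (n : ℕ) (hn : 1 ≤ n)
    (F : Fin n → (Fin n → Bool) → Bool) :
    δ ^ L / 2 ≤ ∫ ω, hamLoss n (fun t => U ((t : ℕ) / L) ω)
      (fun t => F t (fun i => xor (U ((i : ℕ) / L) ω) (Nse (i : ℕ) ω))) ∂μ := by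
  classical
  have mZ : Measurable fun ω => (fun i : Fin n => xor (U ((i : ℕ) / L) ω) (Nse (i : ℕ) ω)) :=
    measurable_pi_lambda _ (fun i => measurable_xor_comp (hmeasU _) (hmeasN _))
  set E : Fin n → Set Ω := fun t =>
    {ω | F t (fun i => xor (U ((i : ℕ) / L) ω) (Nse (i : ℕ) ω)) ≠ U ((t : ℕ) / L) ω} with hE
  have hEmeas : ∀ t, MeasurableSet (E t) := by
    intro t
    have : E t = (fun ω => (F t (fun i => xor (U ((i : ℕ) / L) ω) (Nse (i : ℕ) ω)),
        U ((t : ℕ) / L) ω)) ⁻¹' {p : Bool × Bool | p.1 ≠ p.2} := rfl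
    rw [this]
    exact (((measurable_of_finite (F t)).comp mZ).prodMk (hmeasU _))
      ((Set.toFinite _).measurableSet)
  have hind : ∀ t : Fin n, (fun ω => if (F t (fun i => xor (U ((i : ℕ) / L) ω) (Nse (i : ℕ) ω)))
      ≠ U ((t : ℕ) / L) ω then (1 : ℝ) else 0) = (E t).indicator (fun _ => (1 : ℝ)) := by
    intro t
    funext ω
    by_cases h : (F t (fun i => xor (U ((i : ℕ) / L) ω) (Nse (i : ℕ) ω))) ≠ U ((t : ℕ) / L) ω
    · rw [if_pos h]; exact (Set.indicator_of_mem (show ω ∈ E t from h) (fun _ => (1:ℝ))).symm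
    · rw [if_neg h]; exact (Set.indicator_of_notMem (show ω ∉ E t from h) (fun _ => (1:ℝ))).symm
  have hlb : ∀ t : Fin n, δ ^ L / 2 ≤ (μ (E t)).toReal := by
    intro t
    have h1 := error_lb μ δ hδ0 hδ1 U Nse hmeasU hmeasN hindep hU hN L hL n t (F t)
    have h2 := ENNReal.toReal_mono (measure_ne_top μ _) h1
    rwa [ENNReal.toReal_ofReal (by positivity)] at h2
  have hint : ∫ ω, hamLoss n (fun t => U ((t : ℕ) / L) ω)
      (fun t => F t (fun i => xor (U ((i : ℕ) / L) ω) (Nse (i : ℕ) ω))) ∂μ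
      = (1 / (n : ℝ)) * ∑ t : Fin n, (μ (E t)).toReal := by
    simp only [hamLoss]
    rw [MeasureTheory.integral_const_mul]
    congr 1
    have e1 : (fun ω => ∑ t : Fin n, (if (F t (fun i => xor (U ((i : ℕ) / L) ω)
        (Nse (i : ℕ) ω))) ≠ U ((t : ℕ) / L) ω then (1 : ℝ) else 0))
        = fun ω => ∑ t : Fin n, (E t).indicator (fun _ => (1 : ℝ)) ω :=
      funext fun ω => Finset.sum_congr rfl (fun t _ => congrFun (hind t) ω)
    rw [e1, MeasureTheory.integral_finset_sum _
      (fun t _ => (integrable_const (1 : ℝ)).indicator (hEmeas t))]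
    refine Finset.sum_congr rfl (fun t _ => ?_)
    rw [MeasureTheory.integral_indicator_const _ (hEmeas t), smul_eq_mul, mul_one]
    rfl
  rw [hint]
  have hsum : (n : ℝ) * (δ ^ L / 2) ≤ ∑ t : Fin n, (μ (E t)).toReal := by
    calc (n : ℝ) * (δ ^ L / 2) = ∑ _t : Fin n, (δ ^ L / 2) := by
          rw [Finset.sum_const, Finset.card_univ, Fintype.card_fin, nsmul_eq_mul]
      _ ≤ ∑ t : Fin n, (μ (E t)).toReal := Finset.sum_le_sum (fun t _ => hlb t)
  have hnpos : (0 : ℝ) < n := by exact_mod_cast hn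
  calc δ ^ L / 2 = (1 / (n : ℝ)) * ((n : ℝ) * (δ ^ L / 2)) := by field_simp
    _ ≤ (1 / (n : ℝ)) * ∑ t : Fin n, (μ (E t)).toReal := by
        exact mul_le_mul_of_nonneg_left hsum (by positivity)
lemma integrable_of_bound (μ : Measure Ω) [IsProbabilityMeasure μ] (f : Ω → ℝ) (C : ℝ)
    (hf : Measurable f) (h : ∀ ω, |f ω| ≤ C) : Integrable f μ :=
  (integrable_const C).mono' hf.aestronglyMeasurable
    (ae_of_all μ (by simpa [Real.norm_eq_abs] using h))

lemma partition_integral (μ : Measure Ω) [IsProbabilityMeasure μ]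
    (U Nse : ℕ → Ω → Bool)
    (hmeasU : ∀ i, Measurable (U i)) (hmeasN : ∀ i, Measurable (Nse i))
    (hindep : iIndepFun (Sum.elim U Nse) μ)
    (L n : ℕ)
    (F : (ℕ → Bool) → Ω → ℝ)
    (hFdep : ∀ x x' ω, (∀ i, i < n → x i = x' i) → F x ω = F x' ω)
    (hFfac : ∀ x, ∃ G : (Fin n → Bool) → ℝ, ∀ ω, F x ω = G (fun i => Nse (i : ℕ) ω))
    (hFbd : ∀ x ω, |F x ω| ≤ 1) :
    ∫ ω, F (fun i => U (i / L) ω) ω ∂μ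
      = ∫ ω', (∫ ω, F (fun i => U (i / L) ω') ω ∂μ) ∂μ := by
  classical
  have hmeasf : ∀ j, Measurable (Sum.elim U Nse j) := by
    intro j; cases j with
    | inl a => exact hmeasU a
    | inr a => exact hmeasN a
  set tupU : Ω → (Fin n → Bool) := fun ω j => U (j : ℕ) ω with htupU
  set tupN : Ω → (Fin n → Bool) := fun ω i => Nse (i : ℕ) ω with htupN
  have mtupU : Measurable tupU := measurable_pi_lambda _ (fun j => hmeasU _)
  have mtupN : Measurable tupN := measurable_pi_lambda _ (fun i => hmeasN _)
  set xu : (Fin n → Bool) → ℕ → Bool :=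
    fun u i => if h : i / L < n then u ⟨i / L, h⟩ else false with hxu
  have key1 : ∀ ω' ω, F (fun i => U (i / L) ω') ω = F (xu (tupU ω')) ω := by
    intro ω' ω
    refine hFdep _ _ ω (fun i hi => ?_)
    have hdiv : i / L ≤ i := Nat.div_le_self _ _
    rw [hxu]
    simp only [dif_pos (lt_of_le_of_lt hdiv hi)]
    rfl
  have hFmeas : ∀ x, Measurable (F x) := by
    intro x
    obtain ⟨G, hG⟩ := hFfac x
    have : F x = fun ω => G (tupN ω) := funext hG
    rw [this]
    exact (measurable_of_finite G).comp mtupN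
  -- independence of tupU and tupN
  have hIndUN : IndepFun tupU tupN μ := by
    set S : Finset (ℕ ⊕ ℕ) := (Finset.range n).image Sum.inl with hS
    set T : Finset (ℕ ⊕ ℕ) := (Finset.range n).image Sum.inr with hT
    have hST : Disjoint S T := by
      rw [Finset.disjoint_left]
      rintro a ha hb
      simp only [hS, Finset.mem_image] at ha
      simp only [hT, Finset.mem_image] at hb
      obtain ⟨x, -, rfl⟩ := ha
      obtain ⟨y, -, h⟩ := hb
      cases h
    have base := hindep.indepFun_finset S T hST hmeasf
    have hSmem : ∀ j : Fin n, (Sum.inl (j : ℕ) : ℕ ⊕ ℕ) ∈ S := fun j =>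
      Finset.mem_image.2 ⟨(j : ℕ), Finset.mem_range.2 j.isLt, rfl⟩
    have hTmem : ∀ j : Fin n, (Sum.inr (j : ℕ) : ℕ ⊕ ℕ) ∈ T := fun j =>
      Finset.mem_image.2 ⟨(j : ℕ), Finset.mem_range.2 j.isLt, rfl⟩
    set rU : ({j : ℕ ⊕ ℕ // j ∈ S} → Bool) → (Fin n → Bool) :=
      fun v j => v ⟨Sum.inl (j : ℕ), hSmem j⟩ with hrU
    set rN : ({j : ℕ ⊕ ℕ // j ∈ T} → Bool) → (Fin n → Bool) :=
      fun v j => v ⟨Sum.inr (j : ℕ), hTmem j⟩ with hrN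
    have := base.comp (measurable_of_finite rU) (measurable_of_finite rN)
    exact this
  -- expand in indicators
  set φ : (Fin n → Bool) → Ω → ℝ := fun u ω => if tupU ω = u then 1 else 0 with hφ
  have mφ : ∀ u, Measurable (φ u) := by
    intro u
    have : φ u = (fun v : Fin n → Bool => if v = u then (1 : ℝ) else 0) ∘ tupU := rfl
    rw [this]
    exact (measurable_of_finite _).comp mtupU
  have hφbd : ∀ u ω, |φ u ω| ≤ 1 := by
    intro u ω; rw [hφ]; dsimp only; split <;> norm_num
  have hstep : ∀ ω'' ω, F (xu (tupU ω'')) ω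
      = ∑ u : Fin n → Bool, φ u ω'' * F (xu u) ω := by
    intro ω'' ω
    have hh : ∀ u : Fin n → Bool, φ u ω'' * F (xu u) ω
        = if tupU ω'' = u then F (xu u) ω else 0 := by
      intro u; rw [hφ]; dsimp only; rw [ite_mul, one_mul, zero_mul]
    rw [Finset.sum_congr rfl (fun u _ => hh u),
      Finset.sum_ite_eq Finset.univ (tupU ω'') (fun u => F (xu u) ω)]
    simp
  -- independence of φ u and F (xu u)
  have hprod : ∀ u : Fin n → Bool,
      ∫ ω, φ u ω * F (xu u) ω ∂μ = (∫ ω, φ u ω ∂μ) * ∫ ω, F (xu u) ω ∂μ := by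
    intro u
    obtain ⟨G, hG⟩ := hFfac (xu u)
    have hFx : F (xu u) = (fun v => G v) ∘ tupN := funext hG
    have hφx : φ u = (fun v : Fin n → Bool => if v = u then (1 : ℝ) else 0) ∘ tupU := rfl
    have hind : IndepFun (φ u) (F (xu u)) μ := by
      rw [hFx, hφx]
      exact hIndUN.comp (measurable_of_finite _) (measurable_of_finite _)
    exact hind.integral_fun_mul_eq_mul_integral (mφ u).aestronglyMeasurable (hFmeas _).aestronglyMeasurable
  -- both sides equal the same sum
  have hLHS : ∫ ω, F (fun i => U (i / L) ω) ω ∂μ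
      = ∑ u : Fin n → Bool, (∫ ω, φ u ω ∂μ) * ∫ ω, F (xu u) ω ∂μ := by
    have e1 : (fun ω => F (fun i => U (i / L) ω) ω)
        = fun ω => ∑ u : Fin n → Bool, φ u ω * F (xu u) ω :=
      funext fun ω => by rw [key1 ω ω, hstep ω ω]
    rw [e1, integral_finset_sum]
    · exact Finset.sum_congr rfl fun u _ => hprod u
    · intro u _
      refine integrable_of_bound μ _ 1 ((mφ u).mul (hFmeas _)) (fun ω => ?_)
      rw [abs_mul]
      calc |φ u ω| * |F (xu u) ω| ≤ 1 * 1 :=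
            mul_le_mul (hφbd u ω) (hFbd _ ω) (abs_nonneg _) zero_le_one
        _ = 1 := by norm_num
  have hRHS : ∫ ω', (∫ ω, F (fun i => U (i / L) ω') ω ∂μ) ∂μ
      = ∑ u : Fin n → Bool, (∫ ω, φ u ω ∂μ) * ∫ ω, F (xu u) ω ∂μ := by
    have e1 : (fun ω' => ∫ ω, F (fun i => U (i / L) ω') ω ∂μ)
        = fun ω' => ∑ u : Fin n → Bool, φ u ω' * ∫ ω, F (xu u) ω ∂μ := by
      funext ω'
      have e2 : ∫ ω, F (fun i => U (i / L) ω') ω ∂μ = ∫ ω, F (xu (tupU ω')) ω ∂μ := by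
        congr 1; funext ω; rw [key1 ω' ω]
      rw [e2]
      have e3 : ∫ ω, F (xu (tupU ω')) ω ∂μ
          = ∑ u : Fin n → Bool, (if tupU ω' = u then (1:ℝ) else 0) * ∫ ω, F (xu u) ω ∂μ := by
        rw [Finset.sum_congr rfl (fun u _ => by rw [ite_mul, one_mul, zero_mul]),
          Finset.sum_ite_eq Finset.univ (tupU ω') (fun u => ∫ ω, F (xu u) ω ∂μ)]
        simp
      rw [e3]
    rw [e1, integral_finset_sum]
    · refine Finset.sum_congr rfl fun u _ => ?_
      rw [MeasureTheory.integral_mul_const]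
    · intro u _
      exact (integrable_of_bound μ _ 1 (mφ u) (hφbd u)).mul_const _
  rw [hLHS, hRHS]

end ProbHelpers

/-- Auxiliary: expected-loss integrand for a fixed clean sequence `x`. -/
noncomputable def auxF {Ω : Type*} (Nse : ℕ → Ω → Bool)
    (Xhat : (n : ℕ) → Fin n → (Fin n → Bool) → Bool) (n : ℕ) (x : ℕ → Bool) (ω : Ω) : ℝ :=
  hamLoss n (fun t => x (t : ℕ)) (fun t => Xhat n t (fun i => xor (x (i : ℕ)) (Nse (i : ℕ) ω)))

section AuxF
variable {Ω : Type*} [MeasurableSpace Ω]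

lemma auxF_nonneg (Nse : ℕ → Ω → Bool) (Xhat : (n : ℕ) → Fin n → (Fin n → Bool) → Bool)
    (n : ℕ) (x : ℕ → Bool) (ω : Ω) : 0 ≤ auxF Nse Xhat n x ω := hamLoss_nonneg _ _ _

lemma auxF_le_one (Nse : ℕ → Ω → Bool) (Xhat : (n : ℕ) → Fin n → (Fin n → Bool) → Bool)
    (n : ℕ) (x : ℕ → Bool) (ω : Ω) : auxF Nse Xhat n x ω ≤ 1 := hamLoss_le_one _ _ _

lemma auxF_abs_le_one (Nse : ℕ → Ω → Bool) (Xhat : (n : ℕ) → Fin n → (Fin n → Bool) → Bool)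
    (n : ℕ) (x : ℕ → Bool) (ω : Ω) : |auxF Nse Xhat n x ω| ≤ 1 := by
  rw [abs_of_nonneg (auxF_nonneg Nse Xhat n x ω)]; exact auxF_le_one Nse Xhat n x ω

lemma auxF_dep (Nse : ℕ → Ω → Bool) (Xhat : (n : ℕ) → Fin n → (Fin n → Bool) → Bool)
    (n : ℕ) (x x' : ℕ → Bool) (ω : Ω) (h : ∀ i, i < n → x i = x' i) :
    auxF Nse Xhat n x ω = auxF Nse Xhat n x' ω := by
  have e1 : (fun t : Fin n => x (t : ℕ)) = fun t : Fin n => x' (t : ℕ) :=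
    funext fun t => h _ t.isLt
  have e2 : (fun t : Fin n => Xhat n t (fun i => xor (x (i : ℕ)) (Nse (i : ℕ) ω)))
      = fun t => Xhat n t (fun i => xor (x' (i : ℕ)) (Nse (i : ℕ) ω)) := by
    funext t; congr 1; funext i; rw [h _ i.isLt]
  rw [auxF, auxF, e1, e2]

lemma auxF_fac (Nse : ℕ → Ω → Bool) (Xhat : (n : ℕ) → Fin n → (Fin n → Bool) → Bool)
    (n : ℕ) (x : ℕ → Bool) :
    ∃ G : (Fin n → Bool) → ℝ, ∀ ω, auxF Nse Xhat n x ω = G (fun i => Nse (i : ℕ) ω) :=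
  ⟨fun v => hamLoss n (fun t => x (t : ℕ))
    (fun t => Xhat n t (fun i => xor (x (i : ℕ)) (v i))), fun _ => rfl⟩

lemma integral_le_one (μ : Measure Ω) [IsProbabilityMeasure μ] (f : Ω → ℝ)
    (h0 : ∀ ω, 0 ≤ f ω) (h1 : ∀ ω, f ω ≤ 1) : ∫ ω, f ω ∂μ ≤ 1 := by
  have h := norm_integral_le_of_norm_le_const (μ := μ) (f := f) (C := 1)
    (ae_of_all μ fun ω => by rw [Real.norm_eq_abs, abs_of_nonneg (h0 ω)]; exact h1 ω)
  rw [probReal_univ, mul_one] at h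
  exact le_trans (le_abs_self _) (by rwa [Real.norm_eq_abs] at h)

end AuxF

/-- Converse for linearly many switches (binary/Hamming/BSC case).
With `m ≥ αn` eventually, and `X` built from i.i.d. uniform blocks of length
`L = ⌈1/α⌉` observed through a BSC(δ), `0 < δ < 1/2`: (a) the `m`-switching genie
achieves zero loss, `D_{0,m}(Xⁿ,Zⁿ) = 0` a.s. for all large `n`; (b) any sequence of
`n`-block denoisers has `limsup E[loss] > 0`; hence (c) `limsup E[loss − D_{0,m}] > 0`,
and (d) there is an individual sequence `x` on which the expected excess loss (over the
channel noise only) has positive limsup. -/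
theorem converse_linear_switches {Ω : Type*} [MeasurableSpace Ω]
    (μ : Measure Ω) [IsProbabilityMeasure μ]
    (δ α : ℝ) (hδ0 : 0 < δ) (hδ1 : δ < 1 / 2) (hα : 0 < α)
    (m : ℕ → ℕ) (hm : ∀ᶠ n : ℕ in atTop, α * (n : ℝ) ≤ (m n : ℝ))
    (L : ℕ) (hL : L = ⌈1 / α⌉₊)
    (U Nse : ℕ → Ω → Bool)
    (hmeasU : ∀ i, Measurable (U i)) (hmeasN : ∀ i, Measurable (Nse i))
    (hindep : iIndepFun (Sum.elim U Nse) μ)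
    (hU : ∀ i, μ {ω | U i ω = true} = 1 / 2)
    (hN : ∀ i, μ {ω | Nse i ω = true} = ENNReal.ofReal δ)
    (Xp Zp : ℕ → Ω → Bool)
    (hX : ∀ t ω, Xp t ω = U (t / L) ω)
    (hZ : ∀ t ω, Zp t ω = xor (Xp t ω) (Nse t ω))
    (Xhat : (n : ℕ) → Fin n → (Fin n → Bool) → Bool) :
    (∀ᶠ n in atTop, ∀ᵐ ω ∂μ,
        D0m n (m n) (fun t => Xp t ω) (fun t => Zp t ω) = 0) ∧
      (0 < atTop.limsup fun n =>
        ∫ ω, hamLoss n (fun t => Xp t ω) (fun t => Xhat n t fun i => Zp i ω) ∂μ) ∧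
      (0 < atTop.limsup fun n =>
        ∫ ω, (hamLoss n (fun t => Xp t ω) (fun t => Xhat n t fun i => Zp i ω) -
          D0m n (m n) (fun t => Xp t ω) (fun t => Zp t ω)) ∂μ) ∧
      ∃ x : ℕ → Bool,
        0 < atTop.limsup fun n =>
          ∫ ω, (hamLoss n (fun t => x t)
              (fun t => Xhat n t fun i => xor (x (i : ℕ)) (Nse (i : ℕ) ω)) -
            D0m n (m n) (fun t => x (t : ℕ))
              (fun t => xor (x (t : ℕ)) (Nse (t : ℕ) ω))) ∂μ := by
  classical
  have hLpos : 0 < L := by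
    rw [hL]; exact Nat.ceil_pos.2 (by positivity)
  have hLα : (1 : ℝ) / α ≤ L := hL ▸ Nat.le_ceil _
  set c : ℝ := δ ^ L / 2 with hc
  have hcpos : 0 < c := by rw [hc]; positivity
  -- eventually good n
  have hgood : ∀ᶠ n : ℕ in atTop, 1 ≤ n ∧ n / L ≤ m n := by
    filter_upwards [hm, eventually_ge_atTop 1] with n h1 h2
    refine ⟨h2, ?_⟩
    have hLR : (0 : ℝ) < L := by exact_mod_cast hLpos
    have h3 : ((n / L : ℕ) : ℝ) ≤ (n : ℝ) / L := Nat.cast_div_le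
    have hαL : 1 ≤ α * L := by
      have := (div_le_iff₀ hα).1 hLα
      linarith [this]
    have h4 : (n : ℝ) / L ≤ α * n := by
      rw [div_le_iff₀ hLR]
      calc (n : ℝ) = n * 1 := (mul_one _).symm
        _ ≤ n * (α * L) := mul_le_mul_of_nonneg_left hαL (Nat.cast_nonneg n)
        _ = α * n * L := by ring
    exact_mod_cast le_trans h3 (le_trans h4 h1)
  -- D0m vanishes deterministically for block-constant sequences
  have hD0 : ∀ n, n / L ≤ m n → ∀ ω,
      D0m n (m n) (fun t => Xp t ω) (fun t => Zp t ω) = 0 := by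
    intro n hn ω
    exact D0m_eq_zero L n (m n) hLpos (fun j => U j ω) _ _ (fun t => hX t ω) hn
  have hD0x : ∀ n, n / L ≤ m n → ∀ (b : ℕ → Bool) (z : Fin n → Bool),
      D0m n (m n) (fun t : Fin n => b ((t : ℕ) / L)) z = 0 := fun n hn b z =>
    D0m_eq_zero L n (m n) hLpos b _ z (fun _ => rfl) hn
  -- the reference sequence
  set Ib : ℕ → ℝ := fun n => ∫ ω, auxF Nse Xhat n (fun i => U (i / L) ω) ω ∂μ with hIb
  have hIb_lb : ∀ n, 1 ≤ n → c ≤ Ib n := by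
    intro n hn
    exact exp_loss_lb μ δ hδ0 hδ1 U Nse hmeasU hmeasN hindep hU hN L hLpos n hn (Xhat n)
  have hIb_ub : ∀ n, Ib n ≤ 1 := fun n =>
    integral_le_one μ _ (fun ω => auxF_nonneg Nse Xhat n _ ω) (fun ω => auxF_le_one Nse Xhat n _ ω)
  have hBeq : ∀ n, (∫ ω, hamLoss n (fun t => Xp t ω)
      (fun t => Xhat n t fun i => Zp i ω) ∂μ) = Ib n := by
    intro n
    refine integral_congr_ae (ae_of_all μ fun ω => ?_)
    simp only [auxF]
    congr 1
    · funext t; exact hX _ ω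
    · funext t; congr 1; funext i; rw [hZ, hX]
  have hCeq : ∀ n, n / L ≤ m n → (∫ ω, (hamLoss n (fun t => Xp t ω)
      (fun t => Xhat n t fun i => Zp i ω) -
        D0m n (m n) (fun t => Xp t ω) (fun t => Zp t ω)) ∂μ) = Ib n := by
    intro n hn
    rw [← hBeq n]
    refine integral_congr_ae (ae_of_all μ fun ω => ?_)
    dsimp only
    rw [hD0 n hn ω, sub_zero]
  refine ⟨?_, ?_, ?_, ?_⟩
  · -- (a)
    filter_upwards [hgood] with n hn
    exact ae_of_all μ (hD0 n hn.2)
  · -- (b)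
    refine lt_of_lt_of_le hcpos (le_limsup_of_frequently_le ?_ ?_)
    · refine (hgood.mono fun n hn => ?_).frequently
      rw [hBeq n]; exact hIb_lb n hn.1
    · exact ⟨1, eventually_map.2 (Eventually.of_forall fun n => (hBeq n) ▸ hIb_ub n)⟩
  · -- (c)
    refine lt_of_lt_of_le hcpos (le_limsup_of_frequently_le ?_ ?_)
    · refine (hgood.mono fun n hn => ?_).frequently
      rw [hCeq n hn.2]; exact hIb_lb n hn.1
    · refine ⟨1, eventually_map.2 ?_⟩
      filter_upwards [hgood] with n hn
      rw [hCeq n hn.2]; exact hIb_ub n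
  · -- (d)
    by_contra hcon
    push_neg at hcon
    set ψ : ℕ → Ω → ℝ := fun n ω' => ∫ ω, auxF Nse Xhat n (fun i => U (i / L) ω') ω ∂μ with hψ
    have hψ_nonneg : ∀ n ω', 0 ≤ ψ n ω' := fun n ω' =>
      integral_nonneg fun ω => auxF_nonneg Nse Xhat n _ ω
    have hψ_ub : ∀ n ω', ψ n ω' ≤ 1 := fun n ω' =>
      integral_le_one μ _ (fun ω => auxF_nonneg Nse Xhat n _ ω)
        (fun ω => auxF_le_one Nse Xhat n _ ω)
    have hψmeas : ∀ n, Measurable (ψ n) := by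
      intro n
      have he : ψ n = (fun u : Fin n → Bool =>
          ∫ ω, auxF Nse Xhat n (fun i => if h : i / L < n then u ⟨i / L, h⟩ else false) ω ∂μ)
          ∘ (fun ω' (j : Fin n) => U (j : ℕ) ω') := by
        funext ω'
        simp only [Function.comp_apply, hψ]
        refine integral_congr_ae (ae_of_all μ fun ω => ?_)
        refine auxF_dep Nse Xhat n _ _ ω fun i hi => ?_
        have hin : i / L < n := lt_of_le_of_lt (Nat.div_le_self _ _) hi
        rw [dif_pos hin]
      rw [he]
      exact (measurable_of_finite _).comp (measurable_pi_lambda _ fun j => hmeasU _)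
    -- for each ω', the d-sequence at x = block sequence of ω' tends to 0
    have htend : ∀ ω', Tendsto (fun n => ψ n ω') atTop (𝓝 0) := by
      intro ω'
      have hxb := hcon (fun i => U (i / L) ω')
      have hev : ∀ᶠ n in atTop,
          (∫ ω, (hamLoss n (fun t : Fin n => U ((t : ℕ) / L) ω')
              (fun t => Xhat n t fun i => xor (U ((i : ℕ) / L) ω') (Nse (i : ℕ) ω)) -
            D0m n (m n) (fun t : Fin n => U ((t : ℕ) / L) ω')
              (fun t => xor (U ((t : ℕ) / L) ω') (Nse (t : ℕ) ω))) ∂μ) = ψ n ω' := by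
        filter_upwards [hgood] with n hn
        have hz := hD0x n hn.2 (fun j => U j ω')
        refine integral_congr_ae (ae_of_all μ fun ω => ?_)
        dsimp only
        rw [hz, sub_zero]
        rfl
      have hlimeq : limsup (fun n =>
          ∫ ω, (hamLoss n (fun t : Fin n => U ((t : ℕ) / L) ω')
              (fun t => Xhat n t fun i => xor (U ((i : ℕ) / L) ω') (Nse (i : ℕ) ω)) -
            D0m n (m n) (fun t : Fin n => U ((t : ℕ) / L) ω')
              (fun t => xor (U ((t : ℕ) / L) ω') (Nse (t : ℕ) ω))) ∂μ) atTop
          = limsup (fun n => ψ n ω') atTop := limsup_congr hev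
      have hlim : limsup (fun n => ψ n ω') atTop ≤ 0 := by
        rw [← hlimeq]; exact hxb
      have hb : IsBoundedUnder (· ≤ ·) atTop (fun n => ψ n ω') :=
        ⟨1, eventually_map.2 (Eventually.of_forall fun n => hψ_ub n ω')⟩
      rw [NormedAddCommGroup.tendsto_nhds_zero]
      intro ε hε
      have hlt : limsup (fun n => ψ n ω') atTop < ε := lt_of_le_of_lt hlim hε
      filter_upwards [eventually_lt_of_limsup_lt hlt hb] with n hn
      rw [Real.norm_eq_abs, abs_of_nonneg (hψ_nonneg n ω')]
      exact hn
    have hDCT := MeasureTheory.tendsto_integral_of_dominated_convergence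
      (F := fun n ω' => ψ n ω') (f := fun _ => (0 : ℝ)) (bound := fun _ => (1 : ℝ))
      (fun n => (hψmeas n).aestronglyMeasurable) (integrable_const 1)
      (fun n => ae_of_all μ fun ω' => by
        rw [Real.norm_eq_abs, abs_of_nonneg (hψ_nonneg n ω')]; exact hψ_ub n ω')
      (ae_of_all μ htend)
    rw [integral_zero] at hDCT
    have hpart : ∀ n, 1 ≤ n → c ≤ ∫ ω', ψ n ω' ∂μ := by
      intro n hn
      have hfub := partition_integral μ U Nse hmeasU hmeasN hindep L n
        (auxF Nse Xhat n) (auxF_dep Nse Xhat n) (auxF_fac Nse Xhat n)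
        (auxF_abs_le_one Nse Xhat n)
      rw [hψ, ← hfub]
      exact hIb_lb n hn
    have hle : c ≤ 0 := ge_of_tendsto hDCT (hgood.mono fun n hn => hpart n hn.1)
    linarith
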